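/- Let F₄ be the finite field with four elements. For every LPP g over F₄ there exist a, b, c, d, b', c', d' ∈ F₄ with b³ + c³ = 1 and b'³ + c'³ = 1 such that g(x,y) = f(bx² + cx + d, b'y² + c'y + d') for all x, y, where f(x,y) = (a³xy + a(x+y) + a²)xy + x + y. -/

import Mathlib

set_option maxRecDepth 100000

/-- The field with four elements. -/
abbrev F₄ : Type := GaloisField 2 2

/-- `f : F × F → F` is a local permutation polynomial if both sections
`x ↦ f (x, a)` and `x ↦ f (a, x)` are bijections of `F` for every `a`. -/
def IsLPP {F : Type*} (f : F × F → F) : Prop :=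
  ∀ a : F, Function.Bijective (fun x => f (x, a)) ∧ Function.Bijective (fun x => f (a, x))

/-! ### A concrete model of the field with four elements -/

inductive V : Type | e0 | e1 | ea | eb
deriving DecidableEq

instance : Fintype V :=
  ⟨⟨Multiset.ofList [V.e0, V.e1, V.ea, V.eb], by decide⟩, fun x => by cases x <;> decide⟩

namespace V

def vadd : V → V → V
  | e0, x => x | x, e0 => x
  | e1, e1 => e0 | e1, ea => eb | e1, eb => ea
  | ea, e1 => eb | ea, ea => e0 | ea, eb => e1
  | eb, e1 => ea | eb, ea => e1 | eb, eb => e0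

def vmul : V → V → V
  | e0, _ => e0 | _, e0 => e0
  | e1, x => x | x, e1 => x
  | ea, ea => eb | ea, eb => e1
  | eb, ea => e1 | eb, eb => ea

def vinv : V → V
  | e0 => e0 | e1 => e1 | ea => eb | eb => ea

instance : Zero V := ⟨e0⟩
instance : One V := ⟨e1⟩
instance : Add V := ⟨vadd⟩
instance : Mul V := ⟨vmul⟩
instance : Neg V := ⟨id⟩
instance : Inv V := ⟨vinv⟩

instance : CommRing V where
  add := (· + ·)
  zero := 0
  neg := (- ·)
  mul := (· * ·)
  one := 1
  add_assoc := by decide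
  zero_add := by decide
  add_zero := by decide
  add_comm := by decide
  mul_assoc := by decide
  one_mul := by decide
  mul_one := by decide
  left_distrib := by decide
  right_distrib := by decide
  zero_mul := by decide
  mul_zero := by decide
  neg_add_cancel := by decide
  mul_comm := by decide
  nsmul := nsmulRec
  zsmul := zsmulRec

instance : Field V where
  inv := (·⁻¹)
  exists_pair_ne := ⟨e0, e1, by decide⟩
  mul_inv_cancel := by decide
  inv_zero := rfl
  nnqsmul := _
  qsmul := _

instance : Algebra (ZMod 2) V :=
  RingHom.toAlgebra ⟨⟨⟨fun n => if n = 0 then 0 else 1, by decide⟩, by decide⟩, by decide, by decide⟩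

end V

/-- The model polynomial. -/
def fa (a u v : V) : V := (a ^ 3 * u * v + a * (u + v) + a ^ 2) * u * v + u + v

/-- Every bijection of `V` is given by a semiaffine polynomial. -/
theorem lemA : ∀ p : V → V, Function.Bijective p →
    ∃ b c d : V, b ^ 3 + c ^ 3 = 1 ∧ ∀ x, p x = b * x ^ 2 + c * x + d := by decide

theorem fa_zero_left : ∀ a v : V, fa a 0 v = v := by decide

set_option synthInstance.maxHeartbeats 1000000 in
set_option synthInstance.maxSize 2000 in
set_option maxHeartbeats 4000000 in
theorem aux : ∀ r1 r2 r3 : Equiv.Perm V, r1 0 = 1 → r2 0 = V.ea → r3 0 = V.eb →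
    (∀ v, v ≠ r1 v ∧ v ≠ r2 v ∧ v ≠ r3 v ∧ r1 v ≠ r2 v ∧ r1 v ≠ r3 v ∧ r2 v ≠ r3 v) →
    ∃ a : V, ∀ v, r1 v = fa a 1 v ∧ r2 v = fa a V.ea v ∧ r3 v = fa a V.eb v := by decide

/-- The main theorem over the concrete model `V`. -/
theorem mainV (g : V × V → V) (hg : IsLPP g) :
    ∃ a b c d b' c' d' : V,
      b ^ 3 + c ^ 3 = 1 ∧ b' ^ 3 + c' ^ 3 = 1 ∧
      ∀ x y : V, g (x, y) =
        fa a (b * x ^ 2 + c * x + d) (b' * y ^ 2 + c' * y + d') := by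
  obtain ⟨y0, hy0⟩ := (hg 0).2.surjective 0
  let P : V ≃ V := Equiv.ofBijective (fun x => g (x, y0)) (hg y0).1
  let Q : V ≃ V := Equiv.ofBijective (fun y => g (0, y)) (hg 0).2
  have hQ0 : Q.symm 0 = y0 := (Equiv.symm_apply_eq Q).2 (show (0 : V) = g (0, y0) from hy0.symm)
  have hP0 : P.symm 0 = 0 := (Equiv.symm_apply_eq P).2 (show (0 : V) = g (0, y0) from hy0.symm)
  set h : V → V → V := fun u v => g (P.symm u, Q.symm v) with hh
  have hrow0 : ∀ v, h 0 v = v := by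
    intro v
    show g (P.symm 0, Q.symm v) = v
    rw [hP0]
    exact Q.apply_symm_apply v
  have hcol0 : ∀ u, h u 0 = u := by
    intro u
    show g (P.symm u, Q.symm 0) = u
    rw [hQ0]
    exact P.apply_symm_apply u
  have hrows : ∀ u, Function.Bijective (fun v => h u v) := fun u =>
    ((hg (P.symm u)).2).comp Q.symm.bijective
  have hcols : ∀ v, Function.Injective (fun u => h u v) := fun v =>
    ((hg (Q.symm v)).1.injective).comp P.symm.injective
  have hcol_ne : ∀ (u u' : V), u ≠ u' → ∀ v, h u v ≠ h u' v := by
    intro u u' huu v he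
    exact huu (hcols v he)
  obtain ⟨a, ha⟩ := aux (Equiv.ofBijective _ (hrows V.e1)) (Equiv.ofBijective _ (hrows V.ea))
      (Equiv.ofBijective _ (hrows V.eb)) (hcol0 V.e1) (hcol0 V.ea) (hcol0 V.eb)
      (fun v => ⟨fun he => hcol_ne V.e0 V.e1 (by decide) v ((hrow0 v).symm ▸ he),
        fun he => hcol_ne V.e0 V.ea (by decide) v ((hrow0 v).symm ▸ he),
        fun he => hcol_ne V.e0 V.eb (by decide) v ((hrow0 v).symm ▸ he),
        hcol_ne V.e1 V.ea (by decide) v, hcol_ne V.e1 V.eb (by decide) v,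
        hcol_ne V.ea V.eb (by decide) v⟩)
  have key : ∀ u v, h u v = fa a u v := by
    intro u v
    cases u with
    | e0 => rw [show (V.e0 : V) = 0 from rfl, hrow0 v, fa_zero_left]
    | e1 => exact (ha v).1
    | ea => exact (ha v).2.1
    | eb => exact (ha v).2.2
  obtain ⟨b, c, d, hbc, hp⟩ := lemA (fun x => g (x, y0)) (hg y0).1
  obtain ⟨b', c', d', hbc', hq⟩ := lemA (fun y => g (0, y)) (hg 0).2
  refine ⟨a, b, c, d, b', c', d', hbc, hbc', fun x y => ?_⟩
  have hgxy : g (x, y) = h (P x) (Q y) := by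
    show g (x, y) = g (P.symm (P x), Q.symm (Q y))
    rw [Equiv.symm_apply_apply, Equiv.symm_apply_apply]
  rw [hgxy, key (P x) (Q y), show P x = g (x, y0) from rfl, show Q y = g (0, y) from rfl,
    hp x, hq y]

instance : Fact (Nat.Prime 2) := ⟨Nat.prime_two⟩

/-- Every LPP `g` over `F₄` is of the form
`g (x, y) = f (b x² + c x + d, b' y² + c' y + d')` where
`f (u, v) = (a³uv + a(u+v) + a²)uv + u + v`, `b³ + c³ = 1` and `b'³ + c'³ = 1`. -/
theorem stmt_13 (g : F₄ × F₄ → F₄) (hg : IsLPP g) :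
    ∃ a b c d b' c' d' : F₄,
      b ^ 3 + c ^ 3 = 1 ∧ b' ^ 3 + c' ^ 3 = 1 ∧
      ∀ x y : F₄, g (x, y) =
        (fun p : F₄ × F₄ =>
            (a ^ 3 * p.1 * p.2 + a * (p.1 + p.2) + a ^ 2) * p.1 * p.2 + p.1 + p.2)
          (b * x ^ 2 + c * x + d, b' * y ^ 2 + c' * y + d') := by
  have card : Fintype.card V = 2 ^ 2 := by decide
  let e : V ≃ₐ[ZMod 2] GaloisField 2 2 := GaloisField.algEquivGaloisFieldOfFintype 2 2 card
  have hg' : IsLPP (fun z : V × V => e.symm (g (e z.1, e z.2))) := fun a =>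
    ⟨e.symm.bijective.comp (((hg (e a)).1).comp e.bijective),
     e.symm.bijective.comp (((hg (e a)).2).comp e.bijective)⟩
  obtain ⟨a, b, c, d, b', c', d', h1, h2, heq⟩ := mainV _ hg'
  refine ⟨e a, e b, e c, e d, e b', e c', e d', ?_, ?_, fun X Y => ?_⟩
  · rw [← map_pow, ← map_pow, ← map_add, h1, map_one]
  · rw [← map_pow, ← map_pow, ← map_add, h2, map_one]
  · have h3 := heq (e.symm X) (e.symm Y)
    have h4 : g (X, Y) = e (fa a (b * (e.symm X) ^ 2 + c * e.symm X + d)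
        (b' * (e.symm Y) ^ 2 + c' * e.symm Y + d')) := by
      rw [← h3]
      simp
    rw [h4]
    simp only [fa, map_add, map_mul, map_pow, AlgEquiv.apply_symm_apply]
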